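/- Let H be a complex Hilbert space, d a nonempty countable index set, and K = ℓ²(F_d⁺;H). For every T ∈ B(K) and every m ∈ ℤ there exists a unique operator G_m(T) ∈ B(K) with ‖G_m(T)‖ ≤ ‖T‖ whose matrix entries satisfy (G_m(T))_{μ,ν} = T_{μ,ν} whenever |μ| − |ν| = m, and (G_m(T))_{μ,ν} = 0 otherwise. (G_m(T) is the m-th Fourier coefficient of T, obtained in the paper as the weak integral (1/2π)∫_{-π}^{π} U_s T U_s* e^{-ims} ds for the gauge unitaries U_s(ξ⊗e_w) = e^{i|w|s} ξ⊗e_w.) -/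

import Mathlib

open scoped ENNReal
open ContinuousLinearMap

noncomputable section

/-- `ℓ²(Λ; H)`: square-summable `H`-valued families indexed by `Λ`. -/
abbrev L2 (Λ : Type*) (H : Type*) [NormedAddCommGroup H] [InnerProductSpace ℂ H] :
    Type _ :=
  lp (fun _ : Λ => H) 2

variable {Λ H : Type*} [NormedAddCommGroup H] [InnerProductSpace ℂ H]

open Classical in
/-- `ξ ⊗ e_w`: the element of `ℓ²(Λ;H)` supported at `w` with value `ξ`. -/
def el (w : Λ) (ξ : H) : L2 Λ H := lp.single 2 w ξ

open Classical in
/-- `ξ ↦ ξ ⊗ e_w` as a continuous linear map. -/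
def elCLM (w : Λ) : H →L[ℂ] L2 Λ H :=
  LinearMap.mkContinuous
    { toFun := fun ξ => el w ξ
      map_add' := by
        intro ξ η
        apply lp.ext
        funext j
        by_cases h : j = w
        · subst h; simp [el, lp.single_apply_self]
        · simp [el, lp.single_apply_ne _ _ _ h]
      map_smul' := by
        intro c ξ
        simp [el, lp.single_smul] }
    1
    (by
      intro ξ
      simp only [LinearMap.coe_mk, AddHom.coe_mk, one_mul]
      exact le_of_eq (lp.norm_single (E := fun _ : Λ => H) (by norm_num) w ξ))

/-- Evaluation at coordinate `w` as a continuous linear map. -/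
def coordCLM (w : Λ) : L2 Λ H →L[ℂ] H :=
  LinearMap.mkContinuous
    { toFun := fun f => f w
      map_add' := by intro f g; simp
      map_smul' := by intro c f; simp }
    1
    (by
      intro f
      simp only [one_mul]
      exact lp.norm_apply_le_norm (by norm_num : (2 : ℝ≥0∞) ≠ 0) f w)

/-- The `(μ,ν)` matrix entry of an operator on `ℓ²(Λ;H)`. -/
def entry (T : L2 Λ H →L[ℂ] L2 Λ H) (μ ν : Λ) : H →L[ℂ] H :=
  (coordCLM μ).comp (T.comp (elCLM ν))

/-- Membership in the closure of `S` for the weak operator topology. -/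
def InWOTClosure {E : Type*} [NormedAddCommGroup E] [InnerProductSpace ℂ E]
    (S : Set (E →L[ℂ] E)) (T : E →L[ℂ] E) : Prop :=
  ∀ ε > (0 : ℝ), ∀ (n : ℕ) (ξ η : Fin n → E),
    ∃ A ∈ S, ∀ i, ‖(inner ℂ ((T - A) (ξ i)) (η i) : ℂ)‖ < ε

/-- The closure of `S` in the weak operator topology. -/
def wotClosure {E : Type*} [NormedAddCommGroup E] [InnerProductSpace ℂ E]
    (S : Set (E →L[ℂ] E)) : Set (E →L[ℂ] E) :=
  { T | InWOTClosure S T }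

/-- A set of operators is WOT-closed. -/
def IsWOTClosed {E : Type*} [NormedAddCommGroup E] [InnerProductSpace ℂ E]
    (S : Set (E →L[ℂ] E)) : Prop :=
  wotClosure S ⊆ S

/-- A set `S` of operators is reflexive if any operator `T` such that `T h` lies in the
norm-closure of `S h` for every vector `h` belongs to `S`. -/
def IsReflexiveSet {E : Type*} [NormedAddCommGroup E] [InnerProductSpace ℂ E]
    (S : Set (E →L[ℂ] E)) : Prop :=
  ∀ T : E →L[ℂ] E, (∀ h : E, T h ∈ closure ((fun A : E →L[ℂ] E => A h) '' S)) → T ∈ S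

/-- The WOT-closed linear span of a set of operators. -/
def wotSpan {E : Type*} [NormedAddCommGroup E] [InnerProductSpace ℂ E]
    (S : Set (E →L[ℂ] E)) : Set (E →L[ℂ] E) :=
  wotClosure ((Submodule.span ℂ S : Submodule ℂ (E →L[ℂ] E)) : Set (E →L[ℂ] E))

/-- The reversed word. -/
def rev {ι : Type*} (μ : FreeMonoid ι) : FreeMonoid ι :=
  FreeMonoid.ofList (FreeMonoid.toList μ).reverse

/-- Length of a word. -/
def len {ι : Type*} (μ : FreeMonoid ι) : ℕ := (FreeMonoid.toList μ).length

/-- For `α : ι → (X → X)` and a word `μ = μ_m ⋯ μ_1`, the composition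
`α_μ = α_{μ_m} ∘ ⋯ ∘ α_{μ_1}`. -/
def wordMap {ι X : Type*} (α : ι → X → X) (μ : FreeMonoid ι) : X → X :=
  ((FreeMonoid.toList μ).map α).foldr (· ∘ ·) id

/-- For commuting maps `α_1,…,α_d` and `n ∈ ℕ^d`, the composition
`α^n = α_1^{n_1} ∘ ⋯ ∘ α_d^{n_d}`. -/
def multiIter {X : Type*} {d : ℕ} (α : Fin d → X → X) (n : Fin d → ℕ) : X → X :=
  (List.ofFn fun i => (α i)^[n i]).foldr (· ∘ ·) id

/-- The commutant of a set of operators. -/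
def commutantS {E : Type*} [NormedAddCommGroup E] [InnerProductSpace ℂ E]
    (S : Set (E →L[ℂ] E)) : Set (E →L[ℂ] E) :=
  { T | ∀ s ∈ S, T * s = s * T }



set_option maxHeartbeats 1000000
set_option synthInstance.maxHeartbeats 400000

section FourierAux

variable {Λ H : Type*} [NormedAddCommGroup H] [InnerProductSpace ℂ H]

lemma two_toReal_pos : 0 < ((2:ℝ≥0∞)).toReal := by norm_num

lemma l2_sum_le (f : L2 Λ H) (s : Finset Λ) :
    ∑ i ∈ s, ‖f i‖ ^ ((2:ℝ≥0∞)).toReal ≤ ‖f‖ ^ ((2:ℝ≥0∞)).toReal :=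
  lp.sum_rpow_le_norm_rpow two_toReal_pos f s

lemma l2_norm_le_of_le {g h : L2 Λ H} (hle : ∀ i, ‖g i‖ ≤ ‖h i‖) : ‖g‖ ≤ ‖h‖ :=
  lp.norm_le_of_forall_sum_le two_toReal_pos (norm_nonneg _) fun s =>
    le_trans (Finset.sum_le_sum fun i _ =>
      Real.rpow_le_rpow (norm_nonneg _) (hle i) (le_of_lt two_toReal_pos)) (l2_sum_le h s)

lemma mask_mem (q : Λ → Prop) [DecidablePred q] (f : L2 Λ H) :
    Memℓp (fun ν => if q ν then f ν else (0:H)) 2 := by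
  apply memℓp_gen' (C := ‖f‖ ^ ((2:ℝ≥0∞)).toReal)
  intro s
  refine le_trans (Finset.sum_le_sum fun i _ => ?_) (l2_sum_le f s)
  refine Real.rpow_le_rpow (norm_nonneg _) ?_ (le_of_lt two_toReal_pos)
  split <;> simp

/-- Multiplication by the indicator of `q`, as an operator on `ℓ²`. -/
def maskL (q : Λ → Prop) [DecidablePred q] : L2 Λ H →L[ℂ] L2 Λ H :=
  LinearMap.mkContinuous
    { toFun := fun f => ⟨fun ν => if q ν then f ν else 0, mask_mem q f⟩
      map_add' := by
        intro f g
        apply lp.ext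
        funext ν
        have h1 : ∀ (a b : L2 Λ H) (j : Λ), (a + b) j = a j + b j := fun a b j => by
          rw [lp.coeFn_add]; rfl
        rw [h1]
        show (if q ν then (f + g : L2 Λ H) ν else 0) = _
        rw [h1]
        by_cases h : q ν <;> simp [h]
      map_smul' := by
        intro c f
        apply lp.ext
        funext ν
        have h2 : ∀ (c : ℂ) (a : L2 Λ H) (j : Λ), (c • a) j = c • a j := fun c a j => by
          rw [lp.coeFn_smul]; rfl
        rw [h2]
        show (if q ν then (c • f : L2 Λ H) ν else 0) = _
        rw [h2]
        by_cases h : q ν <;> simp [h] }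
    1
    (fun f => by
      rw [one_mul]
      refine l2_norm_le_of_le fun i => ?_
      show ‖if q i then f i else (0:H)‖ ≤ ‖f i‖
      split <;> simp)

lemma maskL_apply (q : Λ → Prop) [DecidablePred q] (f : L2 Λ H) (ν : Λ) :
    maskL q f ν = if q ν then f ν else 0 := rfl

lemma maskL_el (q : Λ → Prop) [DecidablePred q] (ν : Λ) (ξ : H) :
    maskL q (el ν ξ) = if q ν then el ν ξ else 0 := by
  classical
  apply lp.ext
  funext j
  have hL : maskL q (el ν ξ) j = if q j then (el ν ξ) j else 0 := rfl
  rw [hL]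
  by_cases hq : q ν
  · rw [if_pos hq]
    by_cases hj : q j
    · rw [if_pos hj]
    · rw [if_neg hj]
      by_cases hjv : j = ν
      · subst hjv; exact absurd hq hj
      · simp [el, lp.single_apply_ne _ _ _ hjv, Pi.single_apply, hjv]
  · rw [if_neg hq]
    have h0 : ((0 : L2 Λ H) : ∀ _ : Λ, H) j = 0 := by rw [lp.coeFn_zero]; rfl
    rw [h0]
    by_cases hj : q j
    · rw [if_pos hj]
      by_cases hjv : j = ν
      · subst hjv; exact absurd hj hq
      · simp [el, lp.single_apply_ne _ _ _ hjv, Pi.single_apply, hjv]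
    · rw [if_neg hj]

open Classical in
/-- The `μ`-th row of the `m`-th Fourier coefficient of `T`. -/
def rowL (T : L2 Λ H →L[ℂ] L2 Λ H) (L : Λ → ℕ) (m : ℤ) (μ : Λ) : L2 Λ H →L[ℂ] H :=
  if m ≤ (L μ : ℤ) then
    (coordCLM μ).comp (T.comp (maskL fun ν => (L ν : ℤ) = (L μ : ℤ) - m))
  else 0

lemma sum_ite_le {t : Finset ℕ} {P : ℕ → Prop} [DecidablePred P]
    (hP : ∀ n n', P n → P n' → n = n') {a : ℝ} (ha : 0 ≤ a) :
    (∑ n ∈ t, if P n then a else 0) ≤ a := by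
  classical
  rcases em (∃ n ∈ t, P n) with ⟨n0, hn0t, hn0⟩ | h
  · have hc : ∀ n ∈ t, (if P n then a else 0) = if n = n0 then (if P n then a else 0) else 0 := by
      intro n _
      by_cases hn : P n
      · have := hP n n0 hn hn0; simp [hn, this]
      · simp [hn]
    rw [Finset.sum_congr rfl hc, Finset.sum_ite_eq' t n0]
    simp [hn0t, hn0]
  · push_neg at h
    rw [Finset.sum_eq_zero (fun n hn => by simp [h n hn])]
    exact ha

open Classical in
lemma row_bound (T : L2 Λ H →L[ℂ] L2 Λ H) (L : Λ → ℕ) (m : ℤ) (f : L2 Λ H) (s : Finset Λ) :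
    ∑ μ ∈ s, ‖rowL T L m μ f‖ ^ ((2:ℝ≥0∞)).toReal ≤ (‖T‖ * ‖f‖) ^ ((2:ℝ≥0∞)).toReal := by
  have htr : 0 < ((2:ℝ≥0∞)).toReal := two_toReal_pos
  set tr := ((2:ℝ≥0∞)).toReal with htrdef
  -- the masked vectors
  set msk : ℕ → L2 Λ H := fun n => maskL (fun ν => (L ν : ℤ) = (n : ℤ) - m) f with hmsk
  set s' := s.filter (fun μ => m ≤ (L μ : ℤ)) with hs'
  have hsplit : ∑ μ ∈ s, ‖rowL T L m μ f‖ ^ tr = ∑ μ ∈ s', ‖rowL T L m μ f‖ ^ tr := by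
    rw [hs']
    refine (Finset.sum_filter_of_ne ?_).symm
    intro μ _ hne
    by_contra hcon
    apply hne
    rw [rowL, if_neg hcon]
    simp [Real.zero_rpow htr.ne']
  rw [hsplit]
  set t := s'.image L with ht
  have hfib := Finset.sum_fiberwise_of_maps_to (s := s') (t := t) (g := L)
    (fun μ hμ => Finset.mem_image_of_mem L hμ) (fun μ => ‖rowL T L m μ f‖ ^ tr)
  rw [← hfib]
  have hinner : ∀ n ∈ t, (∑ μ ∈ s'.filter (fun μ => L μ = n), ‖rowL T L m μ f‖ ^ tr)
      ≤ ‖T‖ ^ tr * ‖msk n‖ ^ tr := by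
    intro n hn
    set F : L2 Λ H := T (msk n) with hF
    have hterm : ∀ μ ∈ s'.filter (fun μ => L μ = n), ‖rowL T L m μ f‖ ^ tr = ‖F μ‖ ^ tr := by
      intro μ hμ
      rcases Finset.mem_filter.1 hμ with ⟨hμs', hLn⟩
      rcases Finset.mem_filter.1 hμs' with ⟨_, hm⟩
      have : rowL T L m μ f = F μ := by
        rw [rowL, if_pos hm, hF, hmsk, hLn]
        rfl
      rw [this]
    rw [Finset.sum_congr rfl hterm]
    calc ∑ μ ∈ s'.filter (fun μ => L μ = n), ‖F μ‖ ^ tr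
        ≤ ‖F‖ ^ tr := l2_sum_le F _
      _ ≤ (‖T‖ * ‖msk n‖) ^ tr := by
          refine Real.rpow_le_rpow (norm_nonneg _) ?_ htr.le
          exact T.le_opNorm (msk n)
      _ = ‖T‖ ^ tr * ‖msk n‖ ^ tr := Real.mul_rpow (ContinuousLinearMap.opNorm_nonneg T) (norm_nonneg _)
  have hmask_sum : ∑ n ∈ t, ‖msk n‖ ^ tr ≤ ‖f‖ ^ tr := by
    have hsummand : ∀ n : ℕ, Summable (fun ν => ‖(msk n) ν‖ ^ tr) :=
      fun n => (lp.memℓp (msk n)).summable htr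
    have h1 : ∑ n ∈ t, ‖msk n‖ ^ tr = ∑' ν, ∑ n ∈ t, ‖(msk n) ν‖ ^ tr := by
      rw [Summable.tsum_finsetSum (fun n _ => hsummand n)]
      exact Finset.sum_congr rfl fun n _ => lp.norm_rpow_eq_tsum htr (msk n)
    rw [h1, lp.norm_rpow_eq_tsum htr f]
    refine Summable.tsum_le_tsum ?_ (summable_sum fun n _ => hsummand n)
      ((lp.memℓp f).summable htr)
    intro ν
    have h2 : ∀ n : ℕ, ‖(msk n) ν‖ ^ tr
        = if (L ν : ℤ) = (n : ℤ) - m then ‖f ν‖ ^ tr else 0 := by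
      intro n
      rw [hmsk]
      by_cases hc : (L ν : ℤ) = (n : ℤ) - m
      · rw [if_pos hc]
        have : maskL (fun ν' => (L ν' : ℤ) = (n : ℤ) - m) f ν = f ν := by
          rw [maskL_apply, if_pos hc]
        rw [this]
      · rw [if_neg hc]
        have : maskL (fun ν' => (L ν' : ℤ) = (n : ℤ) - m) f ν = 0 := by
          rw [maskL_apply, if_neg hc]
        rw [this, norm_zero, Real.zero_rpow htr.ne']
    rw [Finset.sum_congr rfl fun n _ => h2 n]
    exact sum_ite_le (fun n n' h h' => by omega)
      (Real.rpow_nonneg (norm_nonneg _) _)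
  calc ∑ n ∈ t, ∑ μ ∈ s'.filter (fun μ => L μ = n), ‖rowL T L m μ f‖ ^ tr
      ≤ ∑ n ∈ t, ‖T‖ ^ tr * ‖msk n‖ ^ tr := Finset.sum_le_sum hinner
    _ = ‖T‖ ^ tr * ∑ n ∈ t, ‖msk n‖ ^ tr := by rw [Finset.mul_sum]
    _ ≤ ‖T‖ ^ tr * ‖f‖ ^ tr := by
        refine mul_le_mul_of_nonneg_left hmask_sum ?_
        exact Real.rpow_nonneg (ContinuousLinearMap.opNorm_nonneg T) _
    _ = (‖T‖ * ‖f‖) ^ tr :=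
      (Real.mul_rpow (ContinuousLinearMap.opNorm_nonneg T) (norm_nonneg _)).symm

/-- The `m`-th Fourier coefficient of `T` (with `L` the length function). -/
def gaugeCoef (T : L2 Λ H →L[ℂ] L2 Λ H) (L : Λ → ℕ) (m : ℤ) : L2 Λ H →L[ℂ] L2 Λ H :=
  LinearMap.mkContinuous
    { toFun := fun f => ⟨fun μ => rowL T L m μ f,
        memℓp_gen' (fun s => row_bound T L m f s)⟩
      map_add' := by
        intro f g
        apply lp.ext
        funext μ
        have h1 : ∀ (a b : L2 Λ H) (j : Λ), (a + b) j = a j + b j := fun a b j => by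
          rw [lp.coeFn_add]; rfl
        rw [h1]
        exact map_add (rowL T L m μ) f g
      map_smul' := by
        intro c f
        apply lp.ext
        funext μ
        have h2 : ∀ (c : ℂ) (a : L2 Λ H) (j : Λ), (c • a) j = c • a j := fun c a j => by
          rw [lp.coeFn_smul]; rfl
        rw [h2]
        exact map_smul (rowL T L m μ) c f }
    ‖T‖
    (fun f => lp.norm_le_of_forall_sum_le two_toReal_pos
      (mul_nonneg (ContinuousLinearMap.opNorm_nonneg T) (norm_nonneg f))
      (fun s => row_bound T L m f s))

lemma gaugeCoef_norm_le (T : L2 Λ H →L[ℂ] L2 Λ H) (L : Λ → ℕ) (m : ℤ) :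
    ‖gaugeCoef T L m‖ ≤ ‖T‖ :=
  LinearMap.mkContinuous_norm_le _ (norm_nonneg T) _

open Classical in
lemma entry_gaugeCoef (T : L2 Λ H →L[ℂ] L2 Λ H) (L : Λ → ℕ) (m : ℤ) (μ ν : Λ) :
    entry (gaugeCoef T L m) μ ν =
      if (L μ : ℤ) - (L ν : ℤ) = m then entry T μ ν else 0 := by
  ext ξ
  have hl : entry (gaugeCoef T L m) μ ν ξ = rowL T L m μ (el ν ξ) := rfl
  rw [hl]
  by_cases h1 : m ≤ (L μ : ℤ)
  · rw [rowL, if_pos h1]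
    have hmask : (maskL (fun ν' => (L ν' : ℤ) = (L μ : ℤ) - m) (el ν ξ) : L2 Λ H)
        = if (L ν : ℤ) = (L μ : ℤ) - m then el ν ξ else 0 := maskL_el _ ν ξ
    show coordCLM μ (T (maskL (fun ν' => (L ν' : ℤ) = (L μ : ℤ) - m) (el ν ξ))) = _
    rw [hmask]
    by_cases h2 : (L ν : ℤ) = (L μ : ℤ) - m
    · rw [if_pos h2, if_pos (show (L μ : ℤ) - (L ν : ℤ) = m by omega)]
      rfl
    · rw [if_neg h2, if_neg (show ¬((L μ : ℤ) - (L ν : ℤ) = m) by omega)]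
      simp
  · rw [rowL, if_neg h1, if_neg (show ¬((L μ : ℤ) - (L ν : ℤ) = m) by omega)]
    simp

/-- An operator on `ℓ²` is determined by its matrix entries. -/
lemma ext_entry {A B : L2 Λ H →L[ℂ] L2 Λ H}
    (h : ∀ μ ν, entry A μ ν = entry B μ ν) : A = B := by
  classical
  ext f μ
  have hf : HasSum (fun ν : Λ => (lp.single 2 ν (f ν) : L2 Λ H)) f :=
    lp.hasSum_single (by norm_num) f
  have hA : HasSum (fun ν : Λ => entry A μ ν (f ν)) (A f μ) :=
    (hf.mapL A).mapL (coordCLM μ)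
  have hB : HasSum (fun ν : Λ => entry A μ ν (f ν)) (B f μ) := by
    have hfun : (fun ν : Λ => entry A μ ν (f ν)) = fun ν : Λ => entry B μ ν (f ν) := by
      funext ν; rw [h μ ν]
    rw [hfun]
    exact (hf.mapL B).mapL (coordCLM μ)
  exact hA.unique hB

end FourierAux

/-- existence and uniqueness of the `m`-th Fourier coefficient `G_m(T)`. -/
theorem statement2
    {H : Type*} [NormedAddCommGroup H] [InnerProductSpace ℂ H] [CompleteSpace H]
    {ι : Type*} [Countable ι] [Nonempty ι]
    (T : L2 (FreeMonoid ι) H →L[ℂ] L2 (FreeMonoid ι) H) (m : ℤ) :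
    ∃! G : L2 (FreeMonoid ι) H →L[ℂ] L2 (FreeMonoid ι) H,
      ‖G‖ ≤ ‖T‖ ∧
        ∀ μ ν : FreeMonoid ι,
          entry G μ ν = if (len μ : ℤ) - (len ν : ℤ) = m then entry T μ ν else 0 := by
  refine ⟨gaugeCoef T len m, ⟨gaugeCoef_norm_le T len m, fun μ ν => entry_gaugeCoef T len m μ ν⟩, ?_⟩
  rintro G' ⟨-, hent⟩
  refine ext_entry fun μ ν => ?_
  rw [hent, entry_gaugeCoef]
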